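/- Let σ be a Radon measure on ℂ and suppose that for some p ∈ ℕ and some R > 0, ∫_{|x|>R} |x|^{-(p+1)} dσ(x) < ∞. Then for π_σ-almost every configuration γ, the product Π_p(z, γ) = ∏_{x ∈ γ, x ≠ 0} E_p(z/x) converges locally uniformly on ℂ and defines an entire function of z. -/

import Mathlib

set_option maxHeartbeats 1000000

open Complex MeasureTheory Filter Topology
open scoped ENNReal NNReal

noncomputable def weierstrassE (p : ℕ) (z : ℂ) : ℂ :=
  (1 - z) * Complex.exp (∑ k ∈ Finset.Icc 1 p, z ^ k / (k : ℂ))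

instance : MeasurableSpace (Set ℂ) :=
  .generateFrom {A | ∃ (B : Set ℂ) (n : ℕ), MeasurableSet B ∧ A = {γ | (γ ∩ B).ncard = n}}

def IsPoissonPP (π : Measure (Set ℂ)) (σ : Measure ℂ) : Prop :=
  IsProbabilityMeasure π ∧
  (∀ᵐ γ ∂π, ∀ K : Set ℂ, IsCompact K → (γ ∩ K).Finite) ∧
  ∀ f : ℂ → ℝ, Continuous f → HasCompactSupport f →
    ∫ γ, Real.exp (∑' x : γ, f (x : ℂ)) ∂π =
      Real.exp (∫ x, (Real.exp (f x) - 1) ∂σ)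


lemma norm_prod_le_exp_sum {ι : Type*} (v : Finset ι) (g : ι → ℂ) (u : ι → ℝ)
    (h : ∀ i ∈ v, ‖g i - 1‖ ≤ u i) :
    ‖∏ i ∈ v, g i‖ ≤ Real.exp (∑ i ∈ v, u i) := by
  rw [norm_prod, Real.exp_sum]
  refine Finset.prod_le_prod (fun i _ => norm_nonneg _) (fun i hi => ?_)
  calc ‖g i‖ = ‖(g i - 1) + 1‖ := by rw [sub_add_cancel]
    _ ≤ ‖g i - 1‖ + ‖(1:ℂ)‖ := norm_add_le _ _
    _ ≤ u i + 1 := by rw [norm_one]; linarith [h i hi]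
    _ ≤ Real.exp (u i) := Real.add_one_le_exp _

lemma norm_prod_sub_one_le {ι : Type*} (v : Finset ι) (g : ι → ℂ) (u : ι → ℝ)
    (h : ∀ i ∈ v, ‖g i - 1‖ ≤ u i) :
    ‖(∏ i ∈ v, g i) - 1‖ ≤ Real.exp (∑ i ∈ v, u i) - 1 := by
  induction v using Finset.cons_induction with
  | empty => simp
  | cons a v ha ih =>
    have hu0 : ∀ i ∈ v, 0 ≤ u i := fun i hi => le_trans (norm_nonneg _) (h i (Finset.mem_cons_of_mem hi))
    have hua : 0 ≤ u a := le_trans (norm_nonneg _) (h a (Finset.mem_cons_self _ _))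
    rw [Finset.prod_cons, Finset.sum_cons]
    have hP : ‖∏ i ∈ v, g i‖ ≤ Real.exp (∑ i ∈ v, u i) :=
      norm_prod_le_exp_sum v g u (fun i hi => h i (Finset.mem_cons_of_mem hi))
    have ihv := ih (fun i hi => h i (Finset.mem_cons_of_mem hi))
    calc ‖g a * ∏ i ∈ v, g i - 1‖
        = ‖(g a - 1) * ∏ i ∈ v, g i + ((∏ i ∈ v, g i) - 1)‖ := by ring_nf
      _ ≤ ‖(g a - 1) * ∏ i ∈ v, g i‖ + ‖(∏ i ∈ v, g i) - 1‖ := norm_add_le _ _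
      _ ≤ u a * Real.exp (∑ i ∈ v, u i) + (Real.exp (∑ i ∈ v, u i) - 1) := by
          rw [norm_mul]
          gcongr
          exact h a (Finset.mem_cons_self _ _)
      _ ≤ Real.exp (u a + ∑ i ∈ v, u i) - 1 := by
          rw [Real.exp_add]
          nlinarith [Real.add_one_le_exp (u a), Real.exp_pos (∑ i ∈ v, u i)]

lemma real_exp_sub_one_le {δ : ℝ} (h0 : 0 ≤ δ) (h1 : δ ≤ 1) : Real.exp δ - 1 ≤ 2 * δ := by
  have h := Complex.norm_exp_sub_one_le (x := (δ : ℂ))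
    (by rw [Complex.norm_of_nonneg h0]; exact h1)
  have h2 : ‖(Real.exp δ : ℂ) - 1‖ ≤ 2 * ‖(δ : ℂ)‖ := by
    rw [Complex.ofReal_exp]; exact h
  rw [show ((Real.exp δ : ℂ) - 1) = ((Real.exp δ - 1 : ℝ) : ℂ) by push_cast; ring,
    Complex.norm_of_nonneg (by linarith [Real.one_le_exp h0]), Complex.norm_of_nonneg h0] at h2
  linarith

lemma weierstrassE_sub_one_le (p : ℕ) {w : ℂ} (hw : ‖w‖ ≤ 1/2) :
    ‖weierstrassE p w - 1‖ ≤ 4 * ‖w‖ ^ (p + 1) := by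
  have hw1 : ‖w‖ < 1 := lt_of_le_of_lt hw (by norm_num)
  have hs := Complex.hasSum_taylorSeries_neg_log hw1
  have hsm := hs.summable
  set r := ∑' i : ℕ, w ^ (i + (p+1)) / ((i + (p+1) : ℕ) : ℂ) with hr
  have hsplit := Summable.sum_add_tsum_nat_add (f := fun n : ℕ => w ^ n / (n : ℂ)) (p+1) hsm
  rw [hs.tsum_eq] at hsplit
  have hne : (1 : ℂ) - w ≠ 0 := by
    intro h
    rw [sub_eq_zero] at h
    rw [← h] at hw1
    simp at hw1
  have hIcc : ∑ k ∈ Finset.Icc 1 p, w ^ k / (k : ℂ) = ∑ k ∈ Finset.range (p+1), w ^ k / (k : ℂ) := by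
    refine Finset.sum_subset (fun x hx => ?_) (fun x hx hnx => ?_)
    · simp only [Finset.mem_Icc, Finset.mem_range] at hx ⊢; omega
    · have : x = 0 := by
        simp only [Finset.mem_Icc, Finset.mem_range] at hx hnx; omega
      subst this; simp
  have hE : weierstrassE p w = Complex.exp (-r) := by
    have hsum_range : ∑ i ∈ Finset.range (p+1), w ^ i / (i : ℂ) = -Complex.log (1 - w) - r := by
      linear_combination hsplit
    have hexp : Complex.exp (-Complex.log (1 - w) - r) = (1 - w)⁻¹ * Complex.exp (-r) := by
      rw [sub_eq_add_neg, Complex.exp_add, Complex.exp_neg, Complex.exp_log hne]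
    rw [weierstrassE, hIcc, hsum_range, hexp, ← mul_assoc, mul_inv_cancel₀ hne, one_mul]
  have hterm : ∀ i : ℕ, ‖w ^ (i + (p+1)) / ((i + (p+1) : ℕ) : ℂ)‖ ≤ ‖w‖ ^ (p+1) * (1/2) ^ i := by
    intro i
    rw [norm_div, norm_pow]
    have h1 : (1 : ℝ) ≤ ‖((i + (p+1) : ℕ) : ℂ)‖ := by
      rw [Complex.norm_natCast]
      exact_mod_cast Nat.one_le_iff_ne_zero.mpr (by omega)
    calc ‖w‖ ^ (i + (p+1)) / ‖((i + (p+1) : ℕ) : ℂ)‖ ≤ ‖w‖ ^ (i + (p+1)) / 1 := by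
          apply div_le_div_of_nonneg_left _ _ h1 <;> positivity
      _ = ‖w‖ ^ i * ‖w‖ ^ (p+1) := by rw [div_one, pow_add]
      _ ≤ (1/2) ^ i * ‖w‖ ^ (p+1) :=
          mul_le_mul_of_nonneg_right (pow_le_pow_left₀ (norm_nonneg w) hw i) (by positivity)
      _ = ‖w‖ ^ (p+1) * (1/2) ^ i := mul_comm _ _
  have hgeo : Summable (fun i : ℕ => ‖w‖ ^ (p+1) * (1/2) ^ i) :=
    (summable_geometric_of_lt_one (by norm_num) (by norm_num)).mul_left _
  have hsnorm : Summable (fun i : ℕ => ‖w ^ (i + (p+1)) / ((i + (p+1) : ℕ) : ℂ)‖) :=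
    Summable.of_nonneg_of_le (fun i => norm_nonneg _) hterm hgeo
  have hrb : ‖r‖ ≤ 2 * ‖w‖ ^ (p+1) := by
    calc ‖r‖ ≤ ∑' i : ℕ, ‖w ^ (i + (p+1)) / ((i + (p+1) : ℕ) : ℂ)‖ := norm_tsum_le_tsum_norm hsnorm
      _ ≤ ∑' i : ℕ, ‖w‖ ^ (p+1) * (1/2) ^ i := Summable.tsum_le_tsum hterm hsnorm hgeo
      _ = ‖w‖ ^ (p+1) * (1 - 1/2)⁻¹ := by
          rw [tsum_mul_left, tsum_geometric_of_lt_one (by norm_num) (by norm_num)]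
      _ = 2 * ‖w‖ ^ (p+1) := by ring
  have hr1 : ‖r‖ ≤ 1 := by
    have h2 : ‖w‖ ^ (p+1) ≤ (1/2 : ℝ) ^ (p+1) := pow_le_pow_left₀ (norm_nonneg _) hw _
    have h3 : ((1:ℝ)/2) ^ (p+1) ≤ (1/2 : ℝ) ^ 1 := pow_le_pow_of_le_one (by norm_num) (by norm_num) (by omega)
    nlinarith
  have h5 := Complex.norm_exp_sub_one_le (x := -r)
    (by rw [norm_neg]; exact hr1)
  rw [hE]
  calc ‖Complex.exp (-r) - 1‖ ≤ 2 * ‖-r‖ := h5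
    _ = 2 * ‖r‖ := by rw [norm_neg]
    _ ≤ 4 * ‖w‖ ^ (p+1) := by linarith


section key
variable {ι : Type*} {F : ι → ℂ → ℂ} {K : Set ℂ} {u : ι → ℝ}

lemma key_cauchy [DecidableEq ι] (hu : Summable u) (hu0 : ∀ i, 0 ≤ u i) (t₀ : Finset ι)
    (hF : ∀ i ∉ t₀, ∀ z ∈ K, ‖F i z - 1‖ ≤ u i) {B : ℝ}
    (hB : ∀ z ∈ K, ‖∏ i ∈ t₀, F i z‖ ≤ B) :
    ∀ ε > (0:ℝ), ∃ N : Finset ι, ∀ t, N ⊆ t → ∀ t', N ⊆ t' → ∀ z ∈ K,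
      dist (∏ i ∈ t, F i z) (∏ i ∈ t', F i z) < ε := by
  intro ε hε
  set A := ∑' i, u i with hA
  have hA0 : 0 ≤ A := tsum_nonneg hu0
  set C := (max B 0 + 1) * Real.exp A with hC
  have hC1 : 1 ≤ C := by
    have := Real.one_le_exp hA0
    nlinarith [le_max_right B (0:ℝ)]
  have hC0 : 0 < C := lt_of_lt_of_le one_pos hC1
  set δ := min (1/2 : ℝ) (ε / (8 * C)) with hδ
  have hδ0 : 0 < δ := lt_min (by norm_num) (by positivity)
  have hδ1 : δ ≤ 1 := le_trans (min_le_left _ _) (by norm_num)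
  obtain ⟨T, hT⟩ := summable_iff_vanishing.mp hu (Metric.ball (0:ℝ) δ) (Metric.ball_mem_nhds _ hδ0)
  refine ⟨t₀ ∪ T, fun t ht t' ht' z hz => ?_⟩
  -- core estimate
  have core : ∀ a b : Finset ι, t₀ ∪ T ⊆ a → a ⊆ b → ‖(∏ i ∈ b, F i z) - ∏ i ∈ a, F i z‖ ≤ C * (2 * δ) := by
    intro a b hNa hab
    have ht₀a : t₀ ⊆ a := (Finset.union_subset_iff.mp hNa).1
    have hTa : T ⊆ a := (Finset.union_subset_iff.mp hNa).2
    have hprod : ∏ i ∈ b, F i z = (∏ i ∈ a, F i z) * ∏ i ∈ b \ a, F i z := by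
      rw [mul_comm, Finset.prod_sdiff hab]
    have hbnd1 : ‖∏ i ∈ a, F i z‖ ≤ (max B 0) * Real.exp A := by
      have hsplit : ∏ i ∈ a, F i z = (∏ i ∈ a \ t₀, F i z) * ∏ i ∈ t₀, F i z :=
        (Finset.prod_sdiff ht₀a).symm
      rw [hsplit, norm_mul]
      have h1 : ‖∏ i ∈ a \ t₀, F i z‖ ≤ Real.exp (∑ i ∈ a \ t₀, u i) :=
        norm_prod_le_exp_sum _ _ _ (fun i hi => hF i (Finset.mem_sdiff.mp hi).2 z hz)
      have h2 : ∑ i ∈ a \ t₀, u i ≤ A := Summable.sum_le_tsum _ (fun i _ => hu0 i) hu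
      calc ‖∏ i ∈ a \ t₀, F i z‖ * ‖∏ i ∈ t₀, F i z‖
          ≤ Real.exp A * max B 0 := by
            apply mul_le_mul (h1.trans (Real.exp_le_exp.mpr h2))
              ((hB z hz).trans (le_max_left _ _)) (norm_nonneg _) (Real.exp_pos _).le
        _ = (max B 0) * Real.exp A := mul_comm _ _
    have hdisj : Disjoint (b \ a) T := Finset.disjoint_left.mpr
      (fun i hi hiT => (Finset.mem_sdiff.mp hi).2 (hTa hiT))
    have htail : ∑ i ∈ b \ a, u i < δ := by
      have := hT _ hdisj
      rw [Metric.mem_ball, Real.dist_eq, sub_zero] at this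
      exact lt_of_le_of_lt (le_abs_self _) this
    have hbnd2 : ‖(∏ i ∈ b \ a, F i z) - 1‖ ≤ Real.exp δ - 1 := by
      refine le_trans (norm_prod_sub_one_le _ _ u (fun i hi => hF i
        (fun hit₀ => (Finset.mem_sdiff.mp hi).2 (ht₀a hit₀)) z hz)) ?_
      have := Real.exp_le_exp.mpr htail.le
      linarith
    calc ‖(∏ i ∈ b, F i z) - ∏ i ∈ a, F i z‖
        = ‖∏ i ∈ a, F i z‖ * ‖(∏ i ∈ b \ a, F i z) - 1‖ := by
          rw [hprod, ← norm_mul]; ring_nf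
      _ ≤ ((max B 0) * Real.exp A) * (Real.exp δ - 1) := by
          apply mul_le_mul hbnd1 hbnd2 (norm_nonneg _)
          positivity
      _ ≤ C * (Real.exp δ - 1) := by
          have h3 : 0 ≤ Real.exp δ - 1 := by linarith [Real.one_le_exp hδ0.le]
          have h4 : (max B 0) * Real.exp A ≤ C := by
            rw [hC]
            nlinarith [Real.exp_pos A]
          nlinarith
      _ ≤ C * (2 * δ) := by
          have := real_exp_sub_one_le hδ0.le hδ1
          nlinarith
  have e1 := core t (t ∪ t') ht Finset.subset_union_left
  have e2 := core t' (t ∪ t') ht' Finset.subset_union_right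
  have hδε : δ ≤ ε / (8 * C) := min_le_right _ _
  calc dist (∏ i ∈ t, F i z) (∏ i ∈ t', F i z)
      ≤ dist (∏ i ∈ t, F i z) (∏ i ∈ t ∪ t', F i z)
        + dist (∏ i ∈ t ∪ t', F i z) (∏ i ∈ t', F i z) := dist_triangle _ _ _
    _ ≤ C * (2 * δ) + C * (2 * δ) := by
        rw [dist_eq_norm, norm_sub_rev, dist_eq_norm]
        exact add_le_add e1 e2
    _ < ε := by
        have h8 : C * (ε / (8 * C)) = ε / 8 := by field_simp
        nlinarith [mul_le_mul_of_nonneg_left hδε hC0.le]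


lemma key_tendsto [DecidableEq ι] (hu : Summable u) (hu0 : ∀ i, 0 ≤ u i) (t₀ : Finset ι)
    (hF : ∀ i ∉ t₀, ∀ z ∈ K, ‖F i z - 1‖ ≤ u i) {B : ℝ}
    (hB : ∀ z ∈ K, ‖∏ i ∈ t₀, F i z‖ ≤ B) :
    (∀ z ∈ K, Multipliable fun i => F i z) ∧
    TendstoUniformlyOn (fun (t : Finset ι) z => ∏ i ∈ t, F i z)
      (fun z => ∏' i, F i z) atTop K := by
  have key := key_cauchy hu hu0 t₀ hF hB
  have hmult : ∀ z ∈ K, Multipliable fun i => F i z := by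
    intro z hz
    have hcs : CauchySeq (fun t : Finset ι => ∏ i ∈ t, F i z) := by
      rw [Metric.cauchySeq_iff]
      intro ε hε
      obtain ⟨N, hN⟩ := key ε hε
      exact ⟨N, fun m hm n hn => hN m hm n hn z hz⟩
    obtain ⟨a, ha⟩ := cauchySeq_tendsto_of_complete hcs
    exact ⟨a, ha⟩
  refine ⟨hmult, ?_⟩
  have hucs : UniformCauchySeqOn (fun (t : Finset ι) z => ∏ i ∈ t, F i z) atTop K := by
    rw [Metric.uniformCauchySeqOn_iff]
    intro ε hε
    obtain ⟨N, hN⟩ := key ε hε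
    exact ⟨N, fun m hm n hn x hx => hN m hm n hn x hx⟩
  exact hucs.tendstoUniformlyOn_of_tendsto (fun z hz => (hmult z hz).hasProd)

end key


lemma weierstrassE_differentiable (p : ℕ) : Differentiable ℂ (weierstrassE p) := by
  unfold weierstrassE
  apply Differentiable.fun_mul
  · exact (differentiable_const 1).sub differentiable_id
  · exact Differentiable.cexp (Differentiable.fun_sum fun k _ => (differentiable_id.pow k).div_const _)

lemma factor_differentiable (p : ℕ) (x : ℂ) :
    Differentiable ℂ (fun z => weierstrassE p (z / x)) :=
  (weierstrassE_differentiable p).comp (differentiable_id.div_const x)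

lemma main_det (p : ℕ) {R : ℝ} (hR : 0 < R) (s : Set ℂ)
    (hfin : ∀ K : Set ℂ, IsCompact K → (s ∩ K).Finite)
    (hsum : Summable (fun x : s => 1 / max ‖(x:ℂ)‖ R ^ (p+1))) :
    ∃ f : ℂ → ℂ, Differentiable ℂ f ∧ ∀ K : Set ℂ, IsCompact K →
      TendstoUniformlyOn (fun (t : Finset s) (z : ℂ) => ∏ x ∈ t, weierstrassE p (z / (x:ℂ)))
        f atTop K := by
  classical
  have hsetup : ∀ M : ℝ, 0 < M →
      TendstoUniformlyOn (fun (t : Finset s) (z : ℂ) => ∏ x ∈ t, weierstrassE p (z / (x:ℂ)))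
        (fun z => ∏' x : s, weierstrassE p (z / (x:ℂ))) atTop (Metric.closedBall 0 M) := by
    intro M hM
    have hfin2 : ({x : ↥s | ‖(x:ℂ)‖ ≤ 2*M}).Finite := by
      have h1 : (s ∩ Metric.closedBall 0 (2*M)).Finite := hfin _ (isCompact_closedBall _ _)
      have h2 : {x : ↥s | ‖(x:ℂ)‖ ≤ 2*M} ⊆ Subtype.val ⁻¹' (s ∩ Metric.closedBall 0 (2*M)) := by
        intro x hx
        exact ⟨x.2, by simpa [Metric.mem_closedBall, dist_zero_right] using hx⟩
      exact ((h1.preimage (Subtype.val_injective.injOn)).subset h2)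
    set t₀ := hfin2.toFinset with ht₀
    set c : ℝ := 4 * M^(p+1) * max 1 ((R/(2*M))^(p+1)) with hc
    have hc0 : 0 ≤ c := by positivity
    set u : ↥s → ℝ := fun x => c * (1 / max ‖(x:ℂ)‖ R ^ (p+1)) with huu
    have hmaxpos : ∀ x : ↥s, 0 < max ‖(x:ℂ)‖ R := fun x => lt_of_lt_of_le hR (le_max_right _ _)
    have hu0 : ∀ x, 0 ≤ u x := by
      intro x
      have := hmaxpos x
      apply mul_nonneg hc0
      positivity
    have hu : Summable u := hsum.mul_left c
    have hF : ∀ x : ↥s, x ∉ t₀ → ∀ z ∈ Metric.closedBall (0:ℂ) M,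
        ‖weierstrassE p (z / (x:ℂ)) - 1‖ ≤ u x := by
      intro x hx z hz
      have hxgt : 2*M < ‖(x:ℂ)‖ := by
        rw [ht₀, Set.Finite.mem_toFinset] at hx
        exact not_le.mp hx
      have hz' : ‖z‖ ≤ M := by simpa [Metric.mem_closedBall, dist_zero_right] using hz
      have hxpos : (0:ℝ) < ‖(x:ℂ)‖ := by nlinarith
      have hw : ‖z / (x:ℂ)‖ ≤ 1/2 := by
        rw [norm_div, div_le_div_iff₀ hxpos (by norm_num : (0:ℝ) < 2)]
        linarith
      have hle := weierstrassE_sub_one_le p hw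
      have harith : 4 * ‖z / (x:ℂ)‖ ^ (p+1) ≤ u x := by
        rw [norm_div, div_pow]
        have hb1 : ‖z‖^(p+1) ≤ M^(p+1) := pow_le_pow_left₀ (norm_nonneg _) hz' _
        have hxp : (0:ℝ) < ‖(x:ℂ)‖^(p+1) := by positivity
        rcases le_or_gt R ‖(x:ℂ)‖ with hcase | hcase
        · -- max = ‖x‖
          have hmax : max ‖(x:ℂ)‖ R = ‖(x:ℂ)‖ := max_eq_left hcase
          rw [huu]
          simp only
          rw [hmax]
          have hcge1 : 4 * M^(p+1) ≤ c := by
            rw [hc]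
            nlinarith [le_max_left (1:ℝ) ((R/(2*M))^(p+1)), pow_pos hM (p+1)]
          calc 4 * (‖z‖^(p+1) / ‖(x:ℂ)‖^(p+1)) = (4 * ‖z‖^(p+1)) / ‖(x:ℂ)‖^(p+1) := by ring
            _ ≤ c / ‖(x:ℂ)‖^(p+1) := by
                rw [div_le_div_iff₀ hxp hxp]
                nlinarith
            _ = c * (1 / ‖(x:ℂ)‖^(p+1)) := by ring
        · -- ‖x‖ < R, max = R
          have hmax : max ‖(x:ℂ)‖ R = R := max_eq_right hcase.le
          rw [huu]
          simp only
          rw [hmax]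
          have h2M : (0:ℝ) < 2*M := by positivity
          have h2Mx : (2*M)^(p+1) ≤ ‖(x:ℂ)‖^(p+1) := pow_le_pow_left₀ h2M.le hxgt.le _
          have hRp : (0:ℝ) < R^(p+1) := by positivity
          have hcge : 4 * M^(p+1) * ((R/(2*M))^(p+1)) ≤ c := by
            rw [hc]
            nlinarith [le_max_right (1:ℝ) ((R/(2*M))^(p+1)), pow_pos (div_pos hR h2M) (p+1)]
          have hkey : 4 * (‖z‖^(p+1) / ‖(x:ℂ)‖^(p+1)) ≤ 4 * M^(p+1) * ((R/(2*M))^(p+1)) * (1/R^(p+1)) := by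
            rw [div_pow]
            have h1 : ‖z‖^(p+1) / ‖(x:ℂ)‖^(p+1) ≤ M^(p+1) / (2*M)^(p+1) := by
              apply div_le_div₀ (by positivity) hb1 (by positivity) h2Mx
            have h2 : 4 * M^(p+1) * (R^(p+1)/(2*M)^(p+1)) * (1/R^(p+1))
                = 4 * (M^(p+1) / (2*M)^(p+1)) := by
              field_simp
            rw [h2]
            linarith
          calc 4 * (‖z‖^(p+1) / ‖(x:ℂ)‖^(p+1))
              ≤ 4 * M^(p+1) * ((R/(2*M))^(p+1)) * (1/R^(p+1)) := hkey
            _ ≤ c * (1/R^(p+1)) := by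
                apply mul_le_mul_of_nonneg_right hcge
                positivity
      exact hle.trans harith
    have hcont : Continuous (fun z : ℂ => ∏ x ∈ t₀, weierstrassE p (z / (x:ℂ))) :=
      continuous_finset_prod _ (fun x _ => (factor_differentiable p x).continuous)
    obtain ⟨B, hB⟩ := (isCompact_closedBall (0:ℂ) M).exists_bound_of_continuousOn
      hcont.continuousOn
    exact (key_tendsto hu hu0 t₀ hF hB).2
  refine ⟨fun z => ∏' x : s, weierstrassE p (z / (x:ℂ)), ?_, ?_⟩
  · rw [← differentiableOn_univ]
    refine TendstoLocallyUniformlyOn.differentiableOn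
      (φ := (atTop : Filter (Finset ↥s)))
      (F := fun (t : Finset s) (z : ℂ) => ∏ x ∈ t, weierstrassE p (z / (x:ℂ))) ?_ ?_ isOpen_univ
    · rw [tendstoLocallyUniformlyOn_iff_forall_isCompact isOpen_univ]
      intro K _ hK
      obtain ⟨r, hr⟩ := hK.isBounded.subset_closedBall (0:ℂ)
      have hM : (0:ℝ) < max r 1 := lt_of_lt_of_le one_pos (le_max_right _ _)
      exact (hsetup _ hM).mono (hr.trans (Metric.closedBall_subset_closedBall (le_max_left _ _)))
    · refine Filter.Eventually.of_forall fun t => Differentiable.differentiableOn ?_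
      exact Differentiable.fun_finsetProd (fun x _ => factor_differentiable p x)
  · intro K hK
    obtain ⟨r, hr⟩ := hK.isBounded.subset_closedBall (0:ℂ)
    have hM : (0:ℝ) < max r 1 := lt_of_lt_of_le one_pos (le_max_right _ _)
    exact (hsetup _ hM).mono (hr.trans (Metric.closedBall_subset_closedBall (le_max_left _ _)))


noncomputable def hfun (p : ℕ) (R : ℝ) : ℂ → ℝ := fun x => 1 / max ‖x‖ R ^ (p+1)

noncomputable def gcut (p : ℕ) (R : ℝ) (n : ℕ) : ℂ → ℝ :=
  fun x => hfun p R x * max 0 (min 1 ((n+1 : ℝ) - ‖x‖))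

section basic
variable {p : ℕ} {R : ℝ} (hR : 0 < R)
include hR

lemma hfun_pos (x : ℂ) : 0 < hfun p R x := by
  have h1 : 0 < max ‖x‖ R := lt_of_lt_of_le hR (le_max_right _ _)
  unfold hfun; positivity

lemma hfun_nonneg (x : ℂ) : 0 ≤ hfun p R x := (hfun_pos hR x).le

lemma hfun_cont : Continuous (hfun p R) := by
  unfold hfun
  apply Continuous.div continuous_const
  · exact (continuous_norm.max continuous_const).pow _
  · intro x
    have h1 : 0 < max ‖x‖ R := lt_of_lt_of_le hR (le_max_right _ _)
    positivity

lemma gcut_nonneg (n : ℕ) (x : ℂ) : 0 ≤ gcut p R n x :=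
  mul_nonneg (hfun_nonneg hR x) (le_max_left _ _)

lemma gcut_le_hfun (n : ℕ) (x : ℂ) : gcut p R n x ≤ hfun p R x := by
  have h2 : max 0 (min 1 ((n+1 : ℝ) - ‖x‖)) ≤ 1 :=
    max_le zero_le_one (min_le_left _ _)
  calc gcut p R n x ≤ hfun p R x * 1 :=
        mul_le_mul_of_nonneg_left h2 (hfun_nonneg hR x)
    _ = hfun p R x := mul_one _

lemma gcut_mono (x : ℂ) : Monotone (fun n : ℕ => gcut p R n x) := by
  intro n m hnm
  apply mul_le_mul_of_nonneg_left _ (hfun_nonneg hR x)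
  apply max_le_max le_rfl
  apply min_le_min le_rfl
  have : (n : ℝ) ≤ m := Nat.cast_le.mpr hnm
  linarith

lemma gcut_eq_of_le {n : ℕ} {x : ℂ} (hx : ‖x‖ ≤ n) : gcut p R n x = hfun p R x := by
  have h1 : (1:ℝ) ≤ (n+1 : ℝ) - ‖x‖ := by linarith
  unfold gcut
  rw [min_eq_left h1, max_eq_right zero_le_one, mul_one]

lemma gcut_eq_zero {n : ℕ} {x : ℂ} (hx : (n+1 : ℝ) ≤ ‖x‖) : gcut p R n x = 0 := by
  have h1 : min 1 ((n+1 : ℝ) - ‖x‖) ≤ 0 := le_trans (min_le_right _ _) (by linarith)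
  unfold gcut
  rw [max_eq_left h1, mul_zero]

lemma gcut_cont (n : ℕ) : Continuous (gcut p R n) := by
  apply (hfun_cont hR).mul
  exact continuous_const.max (continuous_const.min (continuous_const.sub continuous_norm))

lemma gcut_hcs (n : ℕ) : HasCompactSupport (gcut p R n) := by
  apply HasCompactSupport.intro (isCompact_closedBall (0:ℂ) (n+1))
  intro x hx
  simp only [Metric.mem_closedBall, dist_zero_right, not_le] at hx
  exact gcut_eq_zero hR hx.le

end basic

lemma integrable_hfun {p : ℕ} {R : ℝ} (hR : 0 < R) (σ : Measure ℂ) [IsFiniteMeasureOnCompacts σ]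
    (hσ : ∫⁻ x in {x : ℂ | R < ‖x‖},
        ENNReal.ofReal (1 / ‖x‖ ^ (p + 1)) ∂σ < ⊤) :
    Integrable (hfun p R) σ := by
  have hA : MeasurableSet {x : ℂ | R < ‖x‖} :=
    (isOpen_lt continuous_const continuous_norm).measurableSet
  constructor
  · exact (hfun_cont hR).aestronglyMeasurable
  · rw [hasFiniteIntegral_iff_norm]
    have hnorm : ∀ x, ENNReal.ofReal ‖hfun p R x‖ = ENNReal.ofReal (hfun p R x) := by
      intro x; rw [Real.norm_of_nonneg (hfun_nonneg hR x)]
    simp only [hnorm]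
    rw [← lintegral_add_compl (fun x => ENNReal.ofReal (hfun p R x)) hA]
    apply ENNReal.add_lt_top.mpr
    constructor
    · have heq : ∫⁻ x in {x : ℂ | R < ‖x‖}, ENNReal.ofReal (hfun p R x) ∂σ
          = ∫⁻ x in {x : ℂ | R < ‖x‖},
              ENNReal.ofReal (1 / ‖x‖ ^ (p + 1)) ∂σ := by
        apply setLIntegral_congr_fun hA
        intro x hx
        have : max ‖x‖ R = ‖x‖ := by
          exact max_eq_left (le_of_lt hx)
        show ENNReal.ofReal (hfun p R x) = ENNReal.ofReal (1 / ‖x‖ ^ (p + 1))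
        rw [hfun, this]
      rw [heq]; exact hσ
    · have hle : ∀ x ∈ {x : ℂ | R < ‖x‖}ᶜ,
          ENNReal.ofReal (hfun p R x) ≤ ENNReal.ofReal (1 / R ^ (p+1)) := by
        intro x _
        apply ENNReal.ofReal_le_ofReal
        rw [hfun]
        apply div_le_div_of_nonneg_left one_pos.le (by positivity)
        exact pow_le_pow_left₀ hR.le (le_max_right _ _) _
      calc ∫⁻ x in {x : ℂ | R < ‖x‖}ᶜ, ENNReal.ofReal (hfun p R x) ∂σ
          ≤ ∫⁻ _ in {x : ℂ | R < ‖x‖}ᶜ, ENNReal.ofReal (1 / R ^ (p+1)) ∂σ := by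
            apply setLIntegral_mono' hA.compl hle
        _ = ENNReal.ofReal (1 / R ^ (p+1)) * σ {x : ℂ | R < ‖x‖}ᶜ := by
            rw [setLIntegral_const]
        _ < ⊤ := by
            apply ENNReal.mul_lt_top ENNReal.ofReal_lt_top
            have hsub : {x : ℂ | R < ‖x‖}ᶜ ⊆ Metric.closedBall 0 R := by
              intro x hx
              simp only [Set.mem_compl_iff, Set.mem_setOf_eq, not_lt] at hx
              simpa [Metric.mem_closedBall, dist_zero_right] using hx
            exact lt_of_le_of_lt (measure_mono hsub) (isCompact_closedBall _ _).measure_lt_top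

lemma laplace_eq {π : Measure (Set ℂ)} {σ : Measure ℂ} (hπ : IsPoissonPP π σ)
    (g : ℂ → ℝ) (hc : Continuous g) (hs : HasCompactSupport g) :
    Integrable (fun γ : Set ℂ => Real.exp (∑' x : ↥γ, -g (x:ℂ))) π ∧
    ∫ γ, Real.exp (∑' x : ↥γ, -g (x:ℂ)) ∂π = Real.exp (∫ x, (Real.exp (-g x) - 1) ∂σ) := by
  have hneg : HasCompactSupport (fun x => -g x) := hs.comp_left (g := Neg.neg) neg_zero
  have heq := hπ.2.2 (fun x => -g x) hc.neg hneg
  refine ⟨?_, heq⟩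
  by_contra hni
  rw [integral_undef hni] at heq
  exact absurd heq.symm (ne_of_gt (Real.exp_pos _))

lemma locfin_subtype {γ : Set ℂ} (hloc : ∀ K : Set ℂ, IsCompact K → (γ ∩ K).Finite) (r : ℝ) :
    ({x : ↥γ | ‖(x:ℂ)‖ ≤ r}).Finite := by
  have h1 : (γ ∩ Metric.closedBall 0 r).Finite := hloc _ (isCompact_closedBall _ _)
  have h2 : {x : ↥γ | ‖(x:ℂ)‖ ≤ r} ⊆ Subtype.val ⁻¹' (γ ∩ Metric.closedBall 0 r) := by
    intro x hx
    exact ⟨x.2, by simpa [Metric.mem_closedBall, dist_zero_right] using hx⟩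
  exact (h1.preimage (Subtype.val_injective.injOn)).subset h2

lemma tendsto_ofReal_sums {p : ℕ} {R : ℝ} (hR : 0 < R) {γ : Set ℂ}
    (hloc : ∀ K : Set ℂ, IsCompact K → (γ ∩ K).Finite) :
    ∀ n : ℕ, ∑' x : ↥γ, ENNReal.ofReal (gcut p R n (x:ℂ))
        = ENNReal.ofReal (∑ x ∈ (locfin_subtype hloc (n+1)).toFinset, gcut p R n (x:ℂ)) := by
  intro n
  rw [ENNReal.ofReal_sum_of_nonneg (fun x _ => gcut_nonneg hR n _)]
  apply tsum_eq_sum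
  intro x hx
  rw [Set.Finite.mem_toFinset] at hx
  simp only [Set.mem_setOf_eq, not_le] at hx
  rw [gcut_eq_zero hR (by push_cast; linarith), ENNReal.ofReal_zero]

lemma tendsto_S {p : ℕ} {R : ℝ} (hR : 0 < R) {γ : Set ℂ}
    (hloc : ∀ K : Set ℂ, IsCompact K → (γ ∩ K).Finite) :
    Tendsto (fun n => ∑' x : ↥γ, ENNReal.ofReal (gcut p R n (x:ℂ))) atTop
      (𝓝 (∑' x : ↥γ, ENNReal.ofReal (hfun p R (x:ℂ)))) := by
  have hmono : Monotone (fun n => ∑' x : ↥γ, ENNReal.ofReal (gcut p R n (x:ℂ))) := by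
    intro n m hnm
    exact ENNReal.tsum_le_tsum fun x => ENNReal.ofReal_le_ofReal (gcut_mono hR _ hnm)
  have hsup : (⨆ n, ∑' x : ↥γ, ENNReal.ofReal (gcut p R n (x:ℂ)))
      = ∑' x : ↥γ, ENNReal.ofReal (hfun p R (x:ℂ)) := by
    apply le_antisymm
    · exact iSup_le fun n => ENNReal.tsum_le_tsum fun x =>
        ENNReal.ofReal_le_ofReal (gcut_le_hfun hR n _)
    · rw [ENNReal.tsum_eq_iSup_sum]
      apply iSup_le
      intro F
      set N : ℕ := F.sup fun x => ⌈‖(x:ℂ)‖⌉₊ with hN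
      have hFeq : ∀ x ∈ F, ENNReal.ofReal (hfun p R (x:ℂ)) = ENNReal.ofReal (gcut p R N (x:ℂ)) := by
        intro x hx
        rw [gcut_eq_of_le hR (by
          calc ‖(x:ℂ)‖ ≤ (⌈‖(x:ℂ)‖⌉₊ : ℝ) := Nat.le_ceil _
            _ ≤ (N : ℝ) := Nat.cast_le.mpr (Finset.le_sup (f := fun x : ↥γ => ⌈‖(x:ℂ)‖⌉₊) hx))]
      calc ∑ x ∈ F, ENNReal.ofReal (hfun p R (x:ℂ))
          = ∑ x ∈ F, ENNReal.ofReal (gcut p R N (x:ℂ)) := Finset.sum_congr rfl hFeq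
        _ ≤ ∑' x : ↥γ, ENNReal.ofReal (gcut p R N (x:ℂ)) := ENNReal.sum_le_tsum F
        _ ≤ ⨆ n, ∑' x : ↥γ, ENNReal.ofReal (gcut p R n (x:ℂ)) := le_iSup (fun n => ∑' x : ↥γ, ENNReal.ofReal (gcut p R n (x:ℂ))) N
  rw [← hsup]
  exact tendsto_atTop_iSup hmono

lemma tendsto_exp_tsum {p : ℕ} {R : ℝ} (hR : 0 < R) {γ : Set ℂ}
    (hloc : ∀ K : Set ℂ, IsCompact K → (γ ∩ K).Finite) {t : ℝ} (ht : 0 < t) :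
    Tendsto (fun n => Real.exp (∑' x : ↥γ, -(t * gcut p R n (x:ℂ)))) atTop
      (𝓝 (if (∑' x : ↥γ, ENNReal.ofReal (hfun p R (x:ℂ))) = ⊤ then 0
          else Real.exp (-(t * (∑' x : ↥γ, ENNReal.ofReal (hfun p R (x:ℂ))).toReal)))) := by
  set S := ∑' x : ↥γ, ENNReal.ofReal (hfun p R (x:ℂ)) with hS
  set sn : ℕ → ℝ := fun n => ∑ x ∈ (locfin_subtype hloc (n+1)).toFinset, gcut p R n (x:ℂ) with hsn
  have hsn0 : ∀ n, 0 ≤ sn n := fun n => Finset.sum_nonneg fun x _ => gcut_nonneg hR n _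
  have h1 : ∀ n, (∑' x : ↥γ, -(t * gcut p R n (x:ℂ))) = -(t * sn n) := by
    intro n
    have := tsum_eq_sum (L := SummationFilter.unconditional _) (f := fun x : ↥γ => -(t * gcut p R n (x:ℂ)))
      (s := (locfin_subtype hloc (n+1)).toFinset) (by
        intro x hx
        rw [Set.Finite.mem_toFinset] at hx
        simp only [Set.mem_setOf_eq, not_le] at hx
        show -(t * gcut p R n (x:ℂ)) = 0
        rw [gcut_eq_zero hR (by push_cast; linarith), mul_zero, neg_zero])
    rw [this, hsn]
    rw [Finset.sum_neg_distrib, ← Finset.mul_sum]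
  have h2 : Tendsto (fun n => ENNReal.ofReal (sn n)) atTop (𝓝 S) := by
    have := tendsto_S hR hloc (p := p) (R := R)
    have heq := tendsto_ofReal_sums hR hloc (p := p) (R := R)
    simpa only [heq] using this
  by_cases hStop : S = ⊤
  · rw [if_pos hStop]
    have h3 : Tendsto sn atTop atTop := by
      rw [tendsto_atTop]
      intro b
      have hlt : ENNReal.ofReal (max b 0) < S := by rw [hStop]; exact ENNReal.ofReal_lt_top
      filter_upwards [h2.eventually_const_lt hlt] with n hn
      have := (ENNReal.ofReal_lt_ofReal_iff_of_nonneg (le_max_right b 0)).mp hn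
      calc b ≤ max b 0 := le_max_left _ _
        _ ≤ sn n := this.le
    have h4 : Tendsto (fun n => -(t * sn n)) atTop atBot :=
      tendsto_neg_atTop_atBot.comp (h3.const_mul_atTop ht)
    have h5 := Real.tendsto_exp_atBot.comp h4
    simpa only [h1, Function.comp_def] using h5
  · rw [if_neg hStop]
    have h3 : Tendsto (fun n => (ENNReal.ofReal (sn n)).toReal) atTop (𝓝 S.toReal) :=
      (ENNReal.tendsto_toReal hStop).comp h2
    have h4 : Tendsto sn atTop (𝓝 S.toReal) := by
      have : ∀ n, (ENNReal.ofReal (sn n)).toReal = sn n := fun n => ENNReal.toReal_ofReal (hsn0 n)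
      simpa only [this] using h3
    have h5 := (Real.continuous_exp.tendsto _).comp ((h4.const_mul t).neg)
    simpa only [h1, Function.comp_def] using h5

lemma ae_S_lt_top (σ : Measure ℂ) [IsFiniteMeasureOnCompacts σ]
    (p : ℕ) (R : ℝ) (hR : 0 < R)
    (hσ : ∫⁻ x in {x : ℂ | R < ‖x‖},
        ENNReal.ofReal (1 / ‖x‖ ^ (p + 1)) ∂σ < ⊤)
    (π : Measure (Set ℂ)) (hπ : IsPoissonPP π σ) :
    ∀ᵐ γ ∂π, (∑' x : ↥(γ : Set ℂ), ENNReal.ofReal (hfun p R (x:ℂ))) < ⊤ := by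
  haveI := hπ.1
  have hInth := integrable_hfun hR σ hσ
  set S : Set ℂ → ℝ≥0∞ := fun γ : Set ℂ => ∑' x : ↥γ, ENNReal.ofReal (hfun p R (x:ℂ)) with hSdef
  set E : ℝ → Set ℂ → ℝ :=
    fun t γ => if S γ = ⊤ then 0 else Real.exp (-(t * (S γ).toReal)) with hEdef
  have hE01 : ∀ t γ, 0 < t → E t γ ∈ Set.Icc (0:ℝ) 1 := by
    intro t γ ht
    rw [hEdef]
    dsimp only
    split
    · exact ⟨le_rfl, zero_le_one⟩
    · constructor
      · exact (Real.exp_pos _).le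
      · rw [← Real.exp_zero]
        apply Real.exp_le_exp.mpr
        have : 0 ≤ t * (S γ).toReal := mul_nonneg ht.le ENNReal.toReal_nonneg
        linarith
  have stepB : ∀ t : ℝ, 0 < t → t ≤ 1 →
      Integrable (E t) π ∧
      ∫ γ, E t γ ∂π = Real.exp (∫ x, (Real.exp (-(t * hfun p R x)) - 1) ∂σ) := by
    intro t ht ht1
    have hglap : ∀ n : ℕ,
        Integrable (fun γ : Set ℂ => Real.exp (∑' x : ↥γ, -(t * gcut p R n (x:ℂ)))) π ∧
        ∫ γ, Real.exp (∑' x : ↥γ, -(t * gcut p R n (x:ℂ))) ∂π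
          = Real.exp (∫ x, (Real.exp (-(t * gcut p R n x)) - 1) ∂σ) := by
      intro n
      exact laplace_eq hπ (fun x => t * gcut p R n x)
        (continuous_const.mul (gcut_cont hR n))
        ((gcut_hcs hR n).comp_left (g := fun y => t * y) (mul_zero t))
    have hbound : ∀ n : ℕ, ∀ᵐ γ ∂π,
        ‖Real.exp (∑' x : ↥(γ : Set ℂ), -(t * gcut p R n (x:ℂ)))‖ ≤ (1:ℝ) := by
      intro n
      apply Eventually.of_forall
      intro γ
      rw [Real.norm_eq_abs, abs_of_pos (Real.exp_pos _), ← Real.exp_zero]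
      apply Real.exp_le_exp.mpr
      apply tsum_nonpos
      intro x
      have h0 := mul_nonneg ht.le (gcut_nonneg (p := p) hR n (x:ℂ))
      linarith
    have hconv : ∀ᵐ γ ∂π,
        Tendsto (fun n => Real.exp (∑' x : ↥(γ : Set ℂ), -(t * gcut p R n (x:ℂ)))) atTop
          (𝓝 (E t γ)) := by
      filter_upwards [hπ.2.1] with γ hloc
      exact tendsto_exp_tsum hR hloc ht
    have hEm : AEStronglyMeasurable (E t) π :=
      aestronglyMeasurable_of_tendsto_ae atTop (fun n => (hglap n).1.aestronglyMeasurable) hconv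
    have hEint : Integrable (E t) π := by
      apply Integrable.mono' (integrable_const (1:ℝ)) hEm
      apply Eventually.of_forall
      intro γ
      rw [Real.norm_eq_abs, _root_.abs_of_nonneg (hE01 t γ ht).1]
      exact (hE01 t γ ht).2
    have hlim1 : Tendsto (fun n => ∫ γ, Real.exp (∑' x : ↥γ, -(t * gcut p R n (x:ℂ))) ∂π)
        atTop (𝓝 (∫ γ, E t γ ∂π)) :=
      tendsto_integral_of_dominated_convergence (fun _ => (1:ℝ))
        (fun n => (hglap n).1.aestronglyMeasurable) (integrable_const 1) hbound hconv
    have hσconv : Tendsto (fun n => ∫ x, (Real.exp (-(t * gcut p R n x)) - 1) ∂σ) atTop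
        (𝓝 (∫ x, (Real.exp (-(t * hfun p R x)) - 1) ∂σ)) := by
      apply tendsto_integral_of_dominated_convergence (bound := hfun p R)
      · intro n
        exact ((Real.continuous_exp.comp
          ((continuous_const.mul (gcut_cont hR n)).neg)).sub continuous_const).aestronglyMeasurable
      · exact hInth
      · intro n
        apply Eventually.of_forall
        intro x
        have ha : 0 ≤ t * gcut p R n x := mul_nonneg ht.le (gcut_nonneg hR n x)
        have h1 : Real.exp (-(t * gcut p R n x)) ≤ 1 := by
          rw [← Real.exp_zero]
          apply Real.exp_le_exp.mpr
          linarith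
        have h2 := Real.add_one_le_exp (-(t * gcut p R n x))
        have h3 : t * gcut p R n x ≤ hfun p R x := by
          calc t * gcut p R n x ≤ t * hfun p R x :=
                mul_le_mul_of_nonneg_left (gcut_le_hfun hR n x) ht.le
            _ ≤ 1 * hfun p R x := mul_le_mul_of_nonneg_right ht1 (hfun_nonneg hR x)
            _ = hfun p R x := one_mul _
        rw [Real.norm_eq_abs, abs_of_nonpos (by linarith)]
        linarith
      · apply Eventually.of_forall
        intro x
        have hev : ∀ᶠ n : ℕ in atTop,
            Real.exp (-(t * hfun p R x)) - 1 = Real.exp (-(t * gcut p R n x)) - 1 := by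
          rw [eventually_atTop]
          refine ⟨⌈‖x‖⌉₊, fun n hn => ?_⟩
          rw [gcut_eq_of_le hR (le_trans (Nat.le_ceil _) (Nat.cast_le.mpr hn))]
        exact Tendsto.congr' hev tendsto_const_nhds
    have h6 : Tendsto (fun n => ∫ γ, Real.exp (∑' x : ↥γ, -(t * gcut p R n (x:ℂ))) ∂π)
        atTop (𝓝 (Real.exp (∫ x, (Real.exp (-(t * hfun p R x)) - 1) ∂σ))) := by
      have h7 := (Real.continuous_exp.tendsto _).comp hσconv
      apply h7.congr
      intro n
      exact ((hglap n).2).symm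
    exact ⟨hEint, tendsto_nhds_unique hlim1 h6⟩
  -- Step C
  set tk : ℕ → ℝ := fun k => 1 / (k + 1) with htkdef
  have htk0 : ∀ k, 0 < tk k := fun k => by positivity
  have htk1 : ∀ k, tk k ≤ 1 := by
    intro k
    rw [htkdef]
    dsimp only
    rw [div_le_one (by positivity)]
    linarith [Nat.cast_nonneg (α := ℝ) k]
  have htklim : Tendsto tk atTop (𝓝 0) := tendsto_one_div_add_atTop_nhds_zero_nat
  set I : Set ℂ → ℝ := fun γ => if S γ = ⊤ then 0 else 1 with hIdef
  have hIconv : ∀ γ, Tendsto (fun k => E (tk k) γ) atTop (𝓝 (I γ)) := by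
    intro γ
    rw [hEdef, hIdef]
    dsimp only
    by_cases h : S γ = ⊤
    · simp only [if_pos h]
      exact tendsto_const_nhds
    · simp only [if_neg h]
      have h8 : Tendsto (fun k => -(tk k * (S γ).toReal)) atTop (𝓝 (-(0 * (S γ).toReal))) :=
        (htklim.mul_const _).neg
      have h9 := (Real.continuous_exp.tendsto _).comp h8
      simp only [Function.comp, zero_mul, neg_zero, Real.exp_zero] at h9
      exact h9
  have hIm : AEStronglyMeasurable I π :=
    aestronglyMeasurable_of_tendsto_ae atTop
      (fun k => (stepB (tk k) (htk0 k) (htk1 k)).1.aestronglyMeasurable)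
      (Eventually.of_forall hIconv)
  have hInonneg : ∀ γ, 0 ≤ I γ := by
    intro γ; rw [hIdef]; dsimp only; split <;> norm_num
  have hIle1 : ∀ γ, I γ ≤ 1 := by
    intro γ; rw [hIdef]; dsimp only; split <;> norm_num
  have hIint : Integrable I π := by
    apply Integrable.mono' (integrable_const (1:ℝ)) hIm
    exact Eventually.of_forall fun γ => by
      rw [Real.norm_eq_abs, _root_.abs_of_nonneg (hInonneg γ)]; exact hIle1 γ
  have hlim2 : Tendsto (fun k => ∫ γ, E (tk k) γ ∂π) atTop (𝓝 (∫ γ, I γ ∂π)) := by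
    apply tendsto_integral_of_dominated_convergence (fun _ => (1:ℝ))
      (fun k => (stepB (tk k) (htk0 k) (htk1 k)).1.aestronglyMeasurable) (integrable_const 1)
    · intro k
      apply Eventually.of_forall
      intro γ
      rw [Real.norm_eq_abs, _root_.abs_of_nonneg (hE01 (tk k) γ (htk0 k)).1]
      exact (hE01 (tk k) γ (htk0 k)).2
    · exact Eventually.of_forall hIconv
  have hσlim : Tendsto (fun k => ∫ x, (Real.exp (-(tk k * hfun p R x)) - 1) ∂σ) atTop
      (𝓝 (∫ _x, (0:ℝ) ∂σ)) := by
    apply tendsto_integral_of_dominated_convergence (bound := hfun p R)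
    · intro k
      exact ((Real.continuous_exp.comp
        ((continuous_const.mul (hfun_cont hR)).neg)).sub continuous_const).aestronglyMeasurable
    · exact hInth
    · intro k
      apply Eventually.of_forall
      intro x
      have ha : 0 ≤ tk k * hfun p R x := mul_nonneg (htk0 k).le (hfun_nonneg hR x)
      have h1 : Real.exp (-(tk k * hfun p R x)) ≤ 1 := by
        rw [← Real.exp_zero]; apply Real.exp_le_exp.mpr; linarith
      have h2 := Real.add_one_le_exp (-(tk k * hfun p R x))
      have h3 : tk k * hfun p R x ≤ hfun p R x := by
        calc tk k * hfun p R x ≤ 1 * hfun p R x :=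
              mul_le_mul_of_nonneg_right (htk1 k) (hfun_nonneg hR x)
          _ = hfun p R x := one_mul _
      rw [Real.norm_eq_abs, abs_of_nonpos (by linarith)]
      linarith
    · apply Eventually.of_forall
      intro x
      have h8 : Tendsto (fun k => -(tk k * hfun p R x)) atTop (𝓝 (-(0 * hfun p R x))) :=
        (htklim.mul_const _).neg
      have h9 := ((Real.continuous_exp.tendsto _).comp h8).sub_const 1
      simp only [Function.comp, zero_mul, neg_zero, Real.exp_zero, sub_self] at h9
      exact h9
  have hIintegral : ∫ γ, I γ ∂π = 1 := by
    have h10 : Tendsto (fun k => ∫ γ, E (tk k) γ ∂π) atTop (𝓝 1) := by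
      have h11 : Tendsto (fun k => Real.exp (∫ x, (Real.exp (-(tk k * hfun p R x)) - 1) ∂σ))
          atTop (𝓝 (Real.exp (∫ _x, (0:ℝ) ∂σ))) :=
        (Real.continuous_exp.tendsto _).comp hσlim
      simp only [integral_zero, Real.exp_zero] at h11
      apply h11.congr
      intro k
      exact ((stepB (tk k) (htk0 k) (htk1 k)).2).symm
    exact tendsto_nhds_unique hlim2 h10
  have hsub : ∫ γ, (1 - I γ) ∂π = 0 := by
    rw [integral_sub (integrable_const 1) hIint, hIintegral]
    simp [measure_univ]
  have hint2 : Integrable (fun γ => 1 - I γ) π := (integrable_const 1).sub hIint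
  have hnn : 0 ≤ fun γ : Set ℂ => 1 - I γ := fun γ => by dsimp; linarith [hIle1 γ]
  have hae : (fun γ => 1 - I γ) =ᵐ[π] 0 := (integral_eq_zero_iff_of_nonneg hnn hint2).mp hsub
  filter_upwards [hae] with γ hγ
  simp only [Pi.zero_apply] at hγ
  have hne : S γ ≠ ⊤ := by
    intro htop
    rw [hIdef] at hγ
    simp only [htop, if_pos] at hγ
    norm_num at hγ
  exact lt_top_iff_ne_top.mpr hne


theorem poisson_random_entire_general_intensity
    (σ : Measure ℂ) [IsFiniteMeasureOnCompacts σ]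
    (p : ℕ) (R : ℝ) (hR : 0 < R)
    (hσ : ∫⁻ x in {x : ℂ | R < ‖x‖},
        ENNReal.ofReal (1 / ‖x‖ ^ (p + 1)) ∂σ < ⊤)
    (π : Measure (Set ℂ)) (hπ : IsPoissonPP π σ) :
    ∀ᵐ γ ∂π, ∃ f : ℂ → ℂ, Differentiable ℂ f ∧
      ∀ K : Set ℂ, IsCompact K →
        TendstoUniformlyOn
          (fun (s : Finset ↥(γ \ ({0} : Set ℂ))) (z : ℂ) =>
            ∏ x ∈ s, weierstrassE p (z / (x : ℂ)))
          f atTop K := by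
  filter_upwards [hπ.2.1, ae_S_lt_top σ p R hR hσ π hπ] with γ hloc hS
  have hfin : ∀ K : Set ℂ, IsCompact K → ((γ \ {0}) ∩ K).Finite := fun K hK =>
    (hloc K hK).subset (fun x hx => ⟨hx.1.1, hx.2⟩)
  have h1 : Summable (fun x : ↥γ => (ENNReal.ofReal (hfun p R (x:ℂ))).toReal) :=
    ENNReal.summable_toReal hS.ne
  have h2 : Summable (fun x : ↥γ => hfun p R (x:ℂ)) :=
    h1.congr (fun x => ENNReal.toReal_ofReal (hfun_nonneg hR _))
  have h3 : Summable ((fun x : ↥γ => hfun p R (x:ℂ)) ∘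
      (Set.inclusion (Set.diff_subset (s := γ) (t := ({0} : Set ℂ))))) :=
    h2.comp_injective (Set.inclusion_injective _)
  have h4 : Summable (fun x : ↥(γ \ ({0} : Set ℂ)) => 1 / max ‖(x:ℂ)‖ R ^ (p+1)) :=
    h3.congr (fun x => by
      simp only [Function.comp_apply, Set.coe_inclusion]
      rfl)
  exact main_det p hR (γ \ {0}) hfin h4
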